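/- Let φ, φ* ∈ ℝ⁴ and x, w, r, r* ∈ ℝ. Then |φᵀ∇_r(x,w) - φ*ᵀ∇_{r*}(x,w)| ≤ √2 (1 + |x|)[‖φ‖ · I(|w - r| ≤ |r - r*|) + ‖φ - φ*‖], where ∇_r(x,w) = (I(w ≤ r), x·I(w ≤ r), I(w > r), x·I(w > r)). -/

import Mathlib

open scoped RealInnerProductSpace

/-- The regressor vector ∇_r(x,w) = (I(w ≤ r), x·I(w ≤ r), I(w > r), x·I(w > r)) of the
two-regime threshold model, as an element of Euclidean ℝ⁴. -/
noncomputable def nabla (r x w : ℝ) : EuclideanSpace ℝ (Fin 4) :=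
  (WithLp.equiv 2 (Fin 4 → ℝ)).symm
    ![if w ≤ r then (1 : ℝ) else 0, if w ≤ r then x else 0,
      if w ≤ r then 0 else 1, if w ≤ r then 0 else x]

lemma sqrt_aux (x : ℝ) : Real.sqrt (1 + x^2) ≤ 1 + |x| := by
  rw [show (1:ℝ)+|x| = Real.sqrt ((1+|x|)^2) from (Real.sqrt_sq (by positivity)).symm]
  apply Real.sqrt_le_sqrt
  nlinarith [abs_nonneg x, sq_abs x]

lemma norm_nabla (r x w : ℝ) : ‖nabla r x w‖ ≤ 1 + |x| := by
  rw [nabla, EuclideanSpace.norm_eq]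
  by_cases h : w ≤ r <;>
    simp [h, Fin.sum_univ_four, Real.norm_eq_abs, sq_abs] <;>
    · calc Real.sqrt _ ≤ Real.sqrt (1 + x^2) := by apply Real.sqrt_le_sqrt; ring_nf; nlinarith [sq_abs x, sq_nonneg x]
        _ ≤ 1 + |x| := sqrt_aux x

lemma norm_nabla_sub (r rstar x w : ℝ) :
    ‖nabla r x w - nabla rstar x w‖ ≤ Real.sqrt 2 * (1 + |x|) := by
  have h1 : ‖nabla r x w - nabla rstar x w‖
      = Real.sqrt (∑ i, ((nabla r x w) i - (nabla rstar x w) i)^2) := by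
    rw [EuclideanSpace.norm_eq]
    congr 1
    refine Finset.sum_congr rfl fun i _ => ?_
    simp [Real.norm_eq_abs, sq_abs]
  have key : ∀ (a b : ℝ), a ≤ b → Real.sqrt (2*(1+x^2)) ≤ Real.sqrt 2 * (1+|x|) := by
    intro a b _
    rw [Real.sqrt_mul (by norm_num)]
    exact mul_le_mul_of_nonneg_left (sqrt_aux x) (Real.sqrt_nonneg 2)
  by_cases h : w ≤ r <;> by_cases h' : w ≤ rstar
  · have : nabla r x w = nabla rstar x w := by simp [nabla, h, h']
    rw [this, sub_self, norm_zero]; positivity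
  · rw [h1]
    simp only [nabla, WithLp.equiv_symm_apply, PiLp.toLp_apply, Fin.sum_univ_four]
    simp only [Matrix.cons_val_zero, Matrix.cons_val_one, Matrix.head_cons,
      Matrix.cons_val_two, Matrix.tail_cons, Matrix.cons_val_three, h, h', if_true, if_false]
    calc Real.sqrt ((1-0)^2 + (x-0)^2 + (0-1)^2 + (0-x)^2)
        = Real.sqrt (2*(1+x^2)) := by ring_nf
      _ ≤ Real.sqrt 2 * (1+|x|) := key 0 0 le_rfl
  · rw [h1]
    simp only [nabla, WithLp.equiv_symm_apply, PiLp.toLp_apply, Fin.sum_univ_four]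
    simp only [Matrix.cons_val_zero, Matrix.cons_val_one, Matrix.head_cons,
      Matrix.cons_val_two, Matrix.tail_cons, Matrix.cons_val_three, h, h', if_true, if_false]
    calc Real.sqrt ((0-1)^2 + (0-x)^2 + (1-0)^2 + (x-0)^2)
        = Real.sqrt (2*(1+x^2)) := by ring_nf
      _ ≤ Real.sqrt 2 * (1+|x|) := key 0 0 le_rfl
  · have : nabla r x w = nabla rstar x w := by simp [nabla, h, h']
    rw [this, sub_self, norm_zero]; positivity

theorem stmt10 (φ φstar : EuclideanSpace ℝ (Fin 4)) (x w r rstar : ℝ) :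
    |⟪φ, nabla r x w⟫ - ⟪φstar, nabla rstar x w⟫| ≤
      Real.sqrt 2 * (1 + |x|) *
        (‖φ‖ * (if |w - r| ≤ |r - rstar| then (1 : ℝ) else 0) + ‖φ - φstar‖) := by
  have hs2 : (1:ℝ) ≤ Real.sqrt 2 := by
    rw [show (1:ℝ) = Real.sqrt 1 from Real.sqrt_one.symm]
    exact Real.sqrt_le_sqrt (by norm_num)
  have hx : (0:ℝ) ≤ 1 + |x| := by positivity
  have hdecomp : ⟪φ, nabla r x w⟫ - ⟪φstar, nabla rstar x w⟫
      = ⟪φ, nabla r x w - nabla rstar x w⟫ + ⟪φ - φstar, nabla rstar x w⟫ := by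
    rw [inner_sub_right, inner_sub_left]; ring
  have h2 : |⟪φ - φstar, nabla rstar x w⟫| ≤ ‖φ - φstar‖ * (1 + |x|) :=
    le_trans (abs_real_inner_le_norm _ _)
      (mul_le_mul_of_nonneg_left (norm_nabla _ _ _) (norm_nonneg _))
  by_cases hiff : (w ≤ r) ↔ (w ≤ rstar)
  · have heq : nabla r x w = nabla rstar x w := by
      by_cases h : w ≤ r
      · simp [nabla, h, hiff.mp h]
      · have h' : ¬ w ≤ rstar := fun h' => h (hiff.mpr h')
        simp [nabla, h, h']
    rw [hdecomp, heq, sub_self, inner_zero_right, zero_add]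
    have hI : (0:ℝ) ≤ ‖φ‖ * (if |w - r| ≤ |r - rstar| then (1 : ℝ) else 0) := by
      positivity
    rw [mul_add]
    have hA : ‖φ - φstar‖ * (1 + |x|) ≤ Real.sqrt 2 * (1 + |x|) * ‖φ - φstar‖ := by
      nlinarith [norm_nonneg (φ - φstar), mul_nonneg hx (norm_nonneg (φ - φstar))]
    have hB : 0 ≤ Real.sqrt 2 * (1 + |x|) *
        (‖φ‖ * (if |w - r| ≤ |r - rstar| then (1 : ℝ) else 0)) :=
      mul_nonneg (mul_nonneg (Real.sqrt_nonneg 2) hx) hI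
    linarith
  · have hI : |w - r| ≤ |r - rstar| := by
      by_cases h : w ≤ r
      · have h' : ¬ w ≤ rstar := fun h' => hiff ⟨fun _ => h', fun _ => h⟩
        push_neg at h'
        rw [abs_of_nonpos (by linarith), abs_of_nonneg (by linarith)]; linarith
      · have h' : w ≤ rstar := by
          by_contra h''
          exact hiff ⟨fun hh => absurd hh h, fun hh => absurd hh h''⟩
        push_neg at h
        rw [abs_of_nonneg (by linarith), abs_of_nonpos (by linarith)]; linarith
    rw [if_pos hI, mul_one]
    have h1 : |⟪φ, nabla r x w - nabla rstar x w⟫| ≤ ‖φ‖ * (Real.sqrt 2 * (1 + |x|)) :=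
      le_trans (abs_real_inner_le_norm _ _)
        (mul_le_mul_of_nonneg_left (norm_nabla_sub _ _ _ _) (norm_nonneg _))
    calc |⟪φ, nabla r x w⟫ - ⟪φstar, nabla rstar x w⟫|
        ≤ |⟪φ, nabla r x w - nabla rstar x w⟫| + |⟪φ - φstar, nabla rstar x w⟫| := by
          rw [hdecomp]; exact abs_add_le _ _
      _ ≤ ‖φ‖ * (Real.sqrt 2 * (1 + |x|)) + ‖φ - φstar‖ * (1 + |x|) := add_le_add h1 h2
      _ ≤ Real.sqrt 2 * (1 + |x|) * (‖φ‖ + ‖φ - φstar‖) := by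
          nlinarith [mul_nonneg (mul_nonneg (sub_nonneg.mpr hs2) hx) (norm_nonneg (φ - φstar))]
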